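/- Let G be a (K₂ ∪ 2K₁)-free graph and S a cut set of G such that G − S has exactly two components, both of which are nontrivial. Then each of the two components of G − S is a complete graph. -/

import Mathlib

open SimpleGraph

/-- The disjoint union of an edge (on vertices 0,1) and `k` isolated vertices. -/
def K2uK (k : ℕ) : SimpleGraph (Fin (k + 2)) :=
  SimpleGraph.fromRel (fun a b => a = 0 ∧ b = 1)

/-- `G` contains no induced copy of `H`. -/
def HFree {α β : Type*} (H : SimpleGraph α) (G : SimpleGraph β) : Prop :=
  IsEmpty (H ↪g G)

/-- The number of connected components of a graph. -/
noncomputable def numComp {V : Type*} (G : SimpleGraph V) : ℕ :=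
  Nat.card G.ConnectedComponent

/-- `S` is a cut set of `G`: removing `S` leaves at least two components. -/
def IsCutSet {V : Type*} (G : SimpleGraph V) (S : Set V) : Prop :=
  2 ≤ numComp (G.induce (Sᶜ : Set V))

theorem stmt_6 {V : Type*} [Fintype V] (G : SimpleGraph V)
    (hfree : HFree (K2uK 2) G) (S : Set V) (hcut : IsCutSet G S)
    (h2 : numComp (G.induce (Sᶜ : Set V)) = 2)
    (hnontriv : ∀ D : (G.induce (Sᶜ : Set V)).ConnectedComponent, ¬ D.supp.Subsingleton) :
    ∀ D : (G.induce (Sᶜ : Set V)).ConnectedComponent,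
      ∀ a ∈ D.supp, ∀ b ∈ D.supp, a ≠ b → (G.induce (Sᶜ : Set V)).Adj a b := by
  set G' := G.induce (Sᶜ : Set V) with hG'
  intro D a ha b hb hab
  by_contra hadj
  -- another component
  obtain ⟨E, hED⟩ : ∃ E : G'.ConnectedComponent, E ≠ D := by
    by_contra hc
    push_neg at hc
    obtain ⟨c1, c2, hc12, -⟩ := Nat.card_eq_two_iff.mp h2
    exact hc12 ((hc c1).trans (hc c2).symm)
  -- two vertices in E
  have hE := hnontriv E
  rw [Set.not_subsingleton_iff] at hE
  obtain ⟨x, hx, y, hy, hxy⟩ := hE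
  -- an edge in E
  have hreach : G'.Reachable x y := by
    rw [ConnectedComponent.mem_supp_iff] at hx hy
    exact ConnectedComponent.exact (hx.trans hy.symm)
  obtain ⟨w⟩ := hreach
  obtain ⟨v, huv⟩ : ∃ v, G'.Adj x v := by
    cases w with
    | nil => exact absurd rfl hxy
    | cons h p => exact ⟨_, h⟩
  have hv : v ∈ E.supp := by
    rw [ConnectedComponent.mem_supp_iff] at hx ⊢
    rw [← hx]
    exact (ConnectedComponent.connectedComponentMk_eq_of_adj huv).symm
  -- adjacency facts
  rw [ConnectedComponent.mem_supp_iff] at ha hb hx hv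
  have cross : ∀ p q : (Sᶜ : Set V), G'.connectedComponentMk p = E →
      G'.connectedComponentMk q = D → ¬ G'.Adj p q := by
    intro p q hp hq h
    exact hED (hp ▸ hq ▸ ConnectedComponent.connectedComponentMk_eq_of_adj h)
  have hxa := cross x a hx ha
  have hxb := cross x b hx hb
  have hva := cross v a hv ha
  have hvb := cross v b hv hb
  have hG'adj : ∀ p q : (Sᶜ : Set V), G'.Adj p q ↔ G.Adj (p : V) (q : V) := by
    intro p q; simp [hG', comap_adj]
  have hne : ∀ p q : (Sᶜ : Set V), G'.connectedComponentMk p = E →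
      G'.connectedComponentMk q = D → (p : V) ≠ (q : V) := by
    intro p q hp hq h
    exact hED (by rw [← hp, ← hq, Subtype.coe_injective h])
  have hxv : (x : V) ≠ (v : V) := fun h => G'.ne_of_adj huv (Subtype.coe_injective h)
  have hab' : (a : V) ≠ (b : V) := fun h => hab (Subtype.coe_injective h)
  have hK : ∀ i j : Fin 4, (K2uK 2).Adj i j ↔ (i = 0 ∧ j = 1) ∨ (i = 1 ∧ j = 0) := by
    intro i j
    fin_cases i <;> fin_cases j <;> simp [K2uK]
  have hGuv : G.Adj (x : V) (v : V) := (hG'adj x v).mp huv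
  have nGxa : ¬ G.Adj (x : V) (a : V) := fun h => hxa ((hG'adj x a).mpr h)
  have nGxb : ¬ G.Adj (x : V) (b : V) := fun h => hxb ((hG'adj x b).mpr h)
  have nGva : ¬ G.Adj (v : V) (a : V) := fun h => hva ((hG'adj v a).mpr h)
  have nGvb : ¬ G.Adj (v : V) (b : V) := fun h => hvb ((hG'adj v b).mpr h)
  have nGab : ¬ G.Adj (a : V) (b : V) := fun h => hadj ((hG'adj a b).mpr h)
  -- build the forbidden embedding
  refine hfree.false ⟨⟨![(x : V), v, a, b], ?_⟩, ?_⟩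
  · intro i j hij
    fin_cases i <;> fin_cases j <;>
      simp only [Matrix.cons_val_zero, Matrix.cons_val_one, Matrix.cons_val_two,
        Matrix.cons_val_three, Matrix.head_cons, Matrix.tail_cons, Fin.isValue] at hij ⊢ <;>
      first
        | rfl
        | exact absurd hij hxv
        | exact absurd hij.symm hxv
        | exact absurd hij (hne x a hx ha)
        | exact absurd hij.symm (hne x a hx ha)
        | exact absurd hij (hne x b hx hb)
        | exact absurd hij.symm (hne x b hx hb)
        | exact absurd hij (hne v a hv ha)
        | exact absurd hij.symm (hne v a hv ha)
        | exact absurd hij (hne v b hv hb)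
        | exact absurd hij.symm (hne v b hv hb)
        | exact absurd hij hab'
        | exact absurd hij.symm hab'
  · intro i j
    show G.Adj (![(x : V), v, a, b] i) (![(x : V), v, a, b] j) ↔ _
    rw [hK]
    fin_cases i <;> fin_cases j <;>
      first
        | exact iff_of_true hGuv (by decide)
        | exact iff_of_true hGuv.symm (by decide)
        | exact iff_of_false (G.irrefl) (by decide)
        | exact iff_of_false nGxa (by decide)
        | exact iff_of_false (fun h => nGxa h.symm) (by decide)
        | exact iff_of_false nGxb (by decide)
        | exact iff_of_false (fun h => nGxb h.symm) (by decide)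
        | exact iff_of_false nGva (by decide)
        | exact iff_of_false (fun h => nGva h.symm) (by decide)
        | exact iff_of_false nGvb (by decide)
        | exact iff_of_false (fun h => nGvb h.symm) (by decide)
        | exact iff_of_false nGab (by decide)
        | exact iff_of_false (fun h => nGab h.symm) (by decide)
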